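/- Let g₁, …, g_m be vectors in ℝ^r and let λ ∈ ℝ^r satisfy 1 + ⟨λ, g_i⟩ > 0 for all i and the score equation (1/m)·∑_{i=1}^m g_i/(1 + ⟨λ, g_i⟩) = 0. Define p_i = 1/(m·(1 + ⟨λ, g_i⟩)) for i = 1, …, m. Then: (i) p_i > 0 for all i, ∑_{i=1}^m p_i = 1, and ∑_{i=1}^m p_i·g_i = 0; (ii) for any q₁, …, q_m > 0 with ∑_{i=1}^m q_i = 1 and ∑_{i=1}^m q_i·g_i = 0, one has ∑_{i=1}^m log q_i ≤ ∑_{i=1}^m log p_i. That is, the weights p_i maximize the empirical log-likelihood subject to the normalization and moment constraints. -/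

import Mathlib

open scoped RealInnerProductSpace
open Finset

/-- **Lagrange-dual representation of the empirical likelihood weights.**
If `λ` satisfies `1 + ⟨λ, gᵢ⟩ > 0` for all `i` and the score equation
`(1/m)·∑ᵢ gᵢ/(1 + ⟨λ, gᵢ⟩) = 0`, then the weights `pᵢ = 1/(m(1 + ⟨λ, gᵢ⟩))` are positive,
sum to one, satisfy the moment constraint `∑ᵢ pᵢ gᵢ = 0`, and maximize the empirical
log-likelihood among all weights satisfying these constraints. -/
theorem el_weights_lagrange_dual
    {r m : ℕ} (hm : 0 < m)
    (g : Fin m → EuclideanSpace ℝ (Fin r)) (lam : EuclideanSpace ℝ (Fin r))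
    (hpos : ∀ i, 0 < 1 + ⟪lam, g i⟫)
    (hscore : (1 / (m : ℝ)) • ∑ i, (1 + ⟪lam, g i⟫)⁻¹ • g i = 0)
    (p : Fin m → ℝ)
    (hp : ∀ i, p i = 1 / (m * (1 + ⟪lam, g i⟫))) :
    (∀ i, 0 < p i) ∧ (∑ i, p i = 1) ∧ (∑ i, p i • g i = 0) ∧
      (∀ q : Fin m → ℝ, (∀ i, 0 < q i) → (∑ i, q i = 1) → (∑ i, q i • g i = 0) →
        ∑ i, Real.log (q i) ≤ ∑ i, Real.log (p i)) := by
  set c : Fin m → ℝ := fun i => 1 + ⟪lam, g i⟫ with hc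
  have hc0 : ∀ i, 0 < c i := hpos
  have hmR : (0:ℝ) < m := Nat.cast_pos.mpr hm
  have hm0 : (m:ℝ) ≠ 0 := ne_of_gt hmR
  have hscore' : ∑ i, (c i)⁻¹ • g i = 0 := by
    rcases smul_eq_zero.mp hscore with h | h
    · exact absurd h (by positivity)
    · exact h
  have hpi : ∀ i, p i = (m:ℝ)⁻¹ * (c i)⁻¹ := by
    intro i; rw [hp i, one_div, mul_inv]
  have hppos : ∀ i, 0 < p i := by
    intro i; rw [hpi i]
    have := hc0 i
    positivity
  have hpg : ∑ i, p i • g i = 0 := by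
    have h : ∀ i, p i • g i = (m:ℝ)⁻¹ • ((c i)⁻¹ • g i) := by
      intro i; rw [hpi i, smul_smul]
    simp_rw [h, ← Finset.smul_sum, hscore', smul_zero]
  have key : ∀ w : Fin m → ℝ, (∑ i, w i • g i = 0) → ∑ i, w i * c i = ∑ i, w i := by
    intro w hw
    have h1 : ∑ i, w i * ⟪lam, g i⟫ = 0 := by
      have h2 : ⟪lam, ∑ i, w i • g i⟫ = (0:ℝ) := by rw [hw, inner_zero_right]
      rw [inner_sum] at h2
      simp_rw [real_inner_smul_right] at h2
      exact h2
    calc ∑ i, w i * c i = ∑ i, (w i + w i * ⟪lam, g i⟫) := by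
          refine Finset.sum_congr rfl fun i _ => ?_
          simp only [hc]; ring
      _ = ∑ i, w i + ∑ i, w i * ⟪lam, g i⟫ := Finset.sum_add_distrib
      _ = ∑ i, w i := by rw [h1, add_zero]
  have hpc : ∀ i, p i * c i = (m:ℝ)⁻¹ := by
    intro i
    rw [hpi i, mul_assoc, inv_mul_cancel₀ (hc0 i).ne', mul_one]
  have hpsum : ∑ i, p i = 1 := by
    have h := key p hpg
    rw [← h]
    simp_rw [hpc]
    simp [Finset.sum_const, hm0]
  refine ⟨hppos, hpsum, hpg, ?_⟩
  intro q hq hq1 hqg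
  have hqc : ∑ i, q i * c i = 1 := by rw [key q hqg, hq1]
  have hratio : ∑ i, q i / p i = m := by
    have h : ∀ i, q i / p i = (m:ℝ) * (q i * c i) := by
      intro i; rw [hpi i]
      have := (hc0 i).ne'
      field_simp
    simp_rw [h, ← Finset.mul_sum, hqc, mul_one]
  have hlog : ∀ i, Real.log (q i) - Real.log (p i) ≤ q i / p i - 1 := by
    intro i
    have h := Real.log_le_sub_one_of_pos (div_pos (hq i) (hppos i))
    rwa [Real.log_div (hq i).ne' (hppos i).ne'] at h
  have hsum := Finset.sum_le_sum (fun i (_ : i ∈ Finset.univ) => hlog i)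
  rw [Finset.sum_sub_distrib, Finset.sum_sub_distrib, hratio] at hsum
  simp only [Finset.sum_const, Finset.card_univ, Fintype.card_fin, nsmul_eq_mul,
    mul_one] at hsum
  linarith
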